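/- Consider the objective F(x) = (μ/2)(x₁ − b)² + (H/2)(x₂ − b)² + (L/2)((x₃ − c)² + [x₃ − c]₊²) on ℝ³ with stochastic gradient ∇f(x; z) = ∇F(x) + (0, 0, z)ᵀ, where P[z = σ] = P[z = −σ] = 1/2. Let x̂ be the output of local SGD with M machines, K local steps per round, R rounds, fixed stepsize η, initialized at 0. Then with probability 1: x̂₁ = b(1 − (1 − ημ)^{KR}) and x̂₂ = b(1 − (1 − ηH)^{KR}); consequently, if η < 1/(2μKR) then (μ/2)(x̂₁ − b)² ≥ μb²/8, and if η > 2/H then (H/2)(x̂₂ − b)² ≥ Hb²/2. -/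

import Mathlib

open scoped BigOperators

/-- The stochastic gradient `∇f(x; z) = ∇F(x) + (0,0,z)ᵀ` of the hard instance
`F(x) = (μ/2)(x₁−b)² + (H/2)(x₂−b)² + (L/2)((x₃−c)² + [x₃−c]₊²)`. -/
noncomputable def hardGrad (μ H L b c : ℝ) (x : Fin 3 → ℝ) (zv : ℝ) : Fin 3 → ℝ :=
  ![μ * (x 0 - b), H * (x 1 - b), L * (x 2 - c) + L * max (x 2 - c) 0 + zv]

/-- For the hard instance, the noise enters only the third coordinate, so the
first two coordinates of the local SGD output `x̂` (the averaged iterate after the final round,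
initialized at `0`, any realization of the noise) are deterministic:
`x̂₁ = b(1 − (1 − ημ)^{KR})` and `x̂₂ = b(1 − (1 − ηH)^{KR})`; consequently, if
`η < 1/(2μKR)` then `(μ/2)(x̂₁ − b)² ≥ μb²/8`, and if `η > 2/H` then
`(H/2)(x̂₂ − b)² ≥ Hb²/2`. -/
theorem local_sgd_deterministic_coordinates
    (μ H L b c σ η : ℝ) (hμ : 0 ≤ μ) (hH : 0 < H) (hη : 0 < η)
    (K M R : ℕ) (hK : 1 ≤ K) (hM : 1 ≤ M) (hR : 1 ≤ R)
    (z : ℕ → Fin M → ℝ)   -- an arbitrary realization of the noise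
    (x : ℕ → Fin M → (Fin 3 → ℝ))
    (hx0 : ∀ m, x 0 m = 0)
    (hxup : ∀ t m, x (t + 1) m =
      if (t + 1) % K = 0 then
        (M : ℝ)⁻¹ • ∑ m' : Fin M, (x t m' - η • hardGrad μ H L b c (x t m') (z t m'))
      else x t m - η • hardGrad μ H L b c (x t m) (z t m)) :
    ((M : ℝ)⁻¹ • ∑ m : Fin M, x (K * R) m) 0 = b * (1 - (1 - η * μ) ^ (K * R)) ∧
    ((M : ℝ)⁻¹ • ∑ m : Fin M, x (K * R) m) 1 = b * (1 - (1 - η * H) ^ (K * R)) ∧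
    (η < 1 / (2 * μ * K * R) →
      μ * b ^ 2 / 8 ≤ μ / 2 * ((((M : ℝ)⁻¹ • ∑ m : Fin M, x (K * R) m) 0) - b) ^ 2) ∧
    (2 / H < η →
      H * b ^ 2 / 2 ≤ H / 2 * ((((M : ℝ)⁻¹ • ∑ m : Fin M, x (K * R) m) 1) - b) ^ 2) := by
  have hM0 : (M : ℝ) ≠ 0 := Nat.cast_ne_zero.mpr (by omega)
  have key : ∀ t m, x t m 0 = b * (1 - (1 - η * μ) ^ t) ∧
      x t m 1 = b * (1 - (1 - η * H) ^ t) := by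
    intro t
    induction t with
    | zero => intro m; simp [hx0]
    | succ t ih =>
      have step0 : ∀ m, (x t m - η • hardGrad μ H L b c (x t m) (z t m)) 0
          = b * (1 - (1 - η * μ) ^ (t + 1)) := by
        intro m
        simp only [Pi.sub_apply, Pi.smul_apply, smul_eq_mul, hardGrad,
          Matrix.cons_val_zero, (ih m).1, pow_succ]
        ring
      have step1 : ∀ m, (x t m - η • hardGrad μ H L b c (x t m) (z t m)) 1
          = b * (1 - (1 - η * H) ^ (t + 1)) := by
        intro m
        simp only [Pi.sub_apply, Pi.smul_apply, smul_eq_mul, hardGrad,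
          Matrix.cons_val_one, Matrix.head_cons, Matrix.cons_val_zero, (ih m).2, pow_succ]
        ring
      intro m
      rw [hxup]
      split_ifs
      · constructor
        · simp only [Pi.smul_apply, Finset.sum_apply, smul_eq_mul]
          rw [Finset.sum_congr rfl fun m' _ => step0 m']
          rw [Finset.sum_const, Finset.card_univ, Fintype.card_fin, nsmul_eq_mul]
          field_simp
        · simp only [Pi.smul_apply, Finset.sum_apply, smul_eq_mul]
          rw [Finset.sum_congr rfl fun m' _ => step1 m']
          rw [Finset.sum_const, Finset.card_univ, Fintype.card_fin, nsmul_eq_mul]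
          field_simp
      · exact ⟨step0 m, step1 m⟩
  have m0 : Fin M := ⟨0, lt_of_lt_of_le one_pos hM⟩
  have avg0 : ((M : ℝ)⁻¹ • ∑ m : Fin M, x (K * R) m) 0
      = b * (1 - (1 - η * μ) ^ (K * R)) := by
    simp only [Pi.smul_apply, Finset.sum_apply, smul_eq_mul]
    rw [Finset.sum_congr rfl fun m' _ => (key (K * R) m').1]
    rw [Finset.sum_const, Finset.card_univ, Fintype.card_fin, nsmul_eq_mul]
    field_simp
  have avg1 : ((M : ℝ)⁻¹ • ∑ m : Fin M, x (K * R) m) 1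
      = b * (1 - (1 - η * H) ^ (K * R)) := by
    simp only [Pi.smul_apply, Finset.sum_apply, smul_eq_mul]
    rw [Finset.sum_congr rfl fun m' _ => (key (K * R) m').2]
    rw [Finset.sum_const, Finset.card_univ, Fintype.card_fin, nsmul_eq_mul]
    field_simp
  refine ⟨avg0, avg1, ?_, ?_⟩
  · intro hlt
    rw [avg0]
    have hdiff : b * (1 - (1 - η * μ) ^ (K * R)) - b = -(b * (1 - η * μ) ^ (K * R)) := by ring
    rw [hdiff, neg_sq]
    have hKR : (1 : ℝ) ≤ (K : ℝ) * R := by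
      have : (1 : ℝ) ≤ (K : ℝ) := by exact_mod_cast hK
      have h2 : (1 : ℝ) ≤ (R : ℝ) := by exact_mod_cast hR
      nlinarith
    rcases eq_or_lt_of_le hμ with hμ0 | hμpos
    · rw [← hμ0]; simp
    · have hsmall : η * μ * (K * R) < 1 / 2 := by
        have h1 : η < 1 / (2 * μ * K * R) := hlt
        have hpos : (0:ℝ) < 2 * μ * K * R := by positivity
        rw [lt_div_iff₀ hpos] at h1
        nlinarith
      have hb : (1 : ℝ) / 2 < (1 - η * μ) ^ (K * R) := by
        have bern : 1 + (K * R : ℕ) * (-(η * μ)) ≤ (1 + (-(η * μ))) ^ (K * R) := by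
          apply one_add_mul_le_pow
          have : η * μ * (K * R) < 1 / 2 := hsmall
          nlinarith [mul_pos hη hμpos]
        have : (1 : ℝ) / 2 < 1 + (K * R : ℕ) * (-(η * μ)) := by
          push_cast
          nlinarith
        calc (1:ℝ)/2 < 1 + (K * R : ℕ) * (-(η * μ)) := this
          _ ≤ (1 + (-(η * μ))) ^ (K * R) := bern
          _ = (1 - η * μ) ^ (K * R) := by ring_nf
      have hq2 : (1:ℝ)/4 ≤ ((1 - η * μ) ^ (K * R))^2 := by nlinarith
      nlinarith [mul_le_mul_of_nonneg_left hq2 (mul_nonneg hμpos.le (sq_nonneg b))]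
  · intro hlt
    rw [avg1]
    have hdiff : b * (1 - (1 - η * H) ^ (K * R)) - b = -(b * (1 - η * H) ^ (K * R)) := by ring
    rw [hdiff, neg_sq]
    have h2 : (2 : ℝ) < η * H := by
      rw [div_lt_iff₀ hH] at hlt
      nlinarith
    have hbase : (1 : ℝ) ≤ |1 - η * H| := by
      rw [abs_sub_comm, abs_of_nonneg (by linarith)]
      linarith
    have hq : (1 : ℝ) ≤ ((1 - η * H) ^ (K * R)) ^ 2 := by
      have : (1 : ℝ) ≤ |1 - η * H| ^ (K * R) := one_le_pow₀ hbase
      have habs : |(1 - η * H) ^ (K * R)| = |1 - η * H| ^ (K * R) := abs_pow _ _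
      nlinarith [sq_abs ((1 - η * H) ^ (K * R))]
    nlinarith [mul_le_mul_of_nonneg_left hq (mul_nonneg hH.le (sq_nonneg b))]
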